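/- Let u ⊆ {1,…,s} be nonempty and k ∈ {0,1,…,m−1}^{|u|}. For every i ∈ {0,…,2^m−1}, Σ_{i′=0}^{2^m−1} ∏_{j∈u} N_{i,i′,j} = Σ_{i′=0}^{2^m−1} ∏_{j∈u} N_{0,i′,j}. -/

import Mathlib

open Finset

noncomputable section

/-- The bit vector `i⃗ ∈ F₂^m` of the integer `i = Σ_{ℓ=1}^m i_ℓ 2^{ℓ-1}`. -/
def bvec (m : ℕ) (i : ℕ) : Fin m → ZMod 2 :=
  fun ℓ => if Nat.testBit i ℓ.1 then 1 else 0

/-- The `(r+1)`-st row (i.e. `r` with 0-indexing) of an `m × m` matrix over `F₂`,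
as a vector in `F₂^m`; junk value `0` if `r ≥ m` (never used under the hypotheses below). -/
def rowAt (m : ℕ) (A : Matrix (Fin m) (Fin m) (ZMod 2)) (r : ℕ) : Fin m → ZMod 2 :=
  fun ℓ => if h : r < m then A ⟨r, h⟩ ℓ else 0

/-- The stacked matrix `C_{u,k}`: for each `j ∈ u`, the first `k j` rows of `C j`. -/
def stack {m s : ℕ} (C : Fin s → Matrix (Fin m) (Fin m) (ZMod 2))
    (u : Finset (Fin s)) (k : Fin s → ℕ) :
    Matrix ((j : {x // x ∈ u}) × Fin (k j.1)) (Fin m) (ZMod 2) :=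
  fun p => rowAt m (C p.1.1) p.2.1

/-- `∇C_{u,k}`: the matrix whose rows are the `(k j + 1)`-st rows (1-indexed) of `C j`, `j ∈ u`. -/
def grad {m s : ℕ} (C : Fin s → Matrix (Fin m) (Fin m) (ZMod 2))
    (u : Finset (Fin s)) (k : Fin s → ℕ) :
    Matrix {x // x ∈ u} (Fin m) (ZMod 2) :=
  fun j => rowAt m (C j.1) (k j.1)

/-- The coordinate `x_{ij} ∈ [0,1)` of the digital net generated by `C₁,…,C_s`:
`x_{ij} = Σ_{ℓ=1}^m y_ℓ 2^{-ℓ}` where `y = C_j · i⃗` over `F₂`. -/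
def pt {m s : ℕ} (C : Fin s → Matrix (Fin m) (Fin m) (ZMod 2)) (i : ℕ) (j : Fin s) : ℝ :=
  ∑ ℓ : Fin m, (((C j).mulVec (bvec m i) ℓ).val : ℝ) / 2 ^ (ℓ.1 + 1)

/-- The factor `N`: with `M(x,x') = max{k ∈ ℕ₀ : ⌊2^k x⌋ = ⌊2^k x'⌋}` (the number of matching
leading binary digits), `Nf x x' c` equals `1` if `M(x,x') > c` (equivalently the first `c+1`
binary digits match), `-1` if `M(x,x') = c` (the first `c` digits match but not `c+1`), and
`0` if `M(x,x') < c`. -/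
def Nf (x x' : ℝ) (c : ℕ) : ℤ :=
  if ⌊(2:ℝ) ^ (c + 1) * x⌋ = ⌊(2:ℝ) ^ (c + 1) * x'⌋ then 1
  else if ⌊(2:ℝ) ^ c * x⌋ = ⌊(2:ℝ) ^ c * x'⌋ then -1
  else 0

/-- The gain coefficient `Γ_{u,k} = 2^{-m} Σ_{i=0}^{2^m-1} Σ_{i'=0}^{2^m-1} ∏_{j∈u} N_{i,i',j}`. -/
def Gam {m s : ℕ} (C : Fin s → Matrix (Fin m) (Fin m) (ZMod 2))
    (u : Finset (Fin s)) (k : Fin s → ℕ) : ℚ :=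
  (2 ^ m : ℚ)⁻¹ * ∑ i ∈ Finset.range (2 ^ m), ∑ i' ∈ Finset.range (2 ^ m),
      ∏ j ∈ u, (Nf (pt C i j) (pt C i' j) (k j) : ℚ)


/-- binary value of the first `c` digits -/
private def nv (c : ℕ) (v : ℕ → ℕ) : ℕ := ∑ ℓ ∈ range c, v ℓ * 2 ^ (c - 1 - ℓ)

private lemma nv_succ (c : ℕ) (v : ℕ → ℕ) : nv (c+1) v = 2 * nv c v + v c := by
  unfold nv
  rw [Finset.sum_range_succ]
  simp only [Nat.add_sub_cancel, Nat.sub_self, pow_zero, mul_one, Finset.mul_sum]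
  congr 1
  refine Finset.sum_congr rfl fun ℓ hℓ => ?_
  have hℓ' : ℓ < c := Finset.mem_range.mp hℓ
  have : c - ℓ = (c - 1 - ℓ) + 1 := by omega
  rw [this, pow_succ]; ring

private lemma nv_inj : ∀ (c : ℕ) (v w : ℕ → ℕ), (∀ ℓ, v ℓ ≤ 1) → (∀ ℓ, w ℓ ≤ 1) →
    nv c v = nv c w → ∀ ℓ < c, v ℓ = w ℓ := by
  intro c
  induction c with
  | zero => intro v w _ _ _ ℓ hℓ; omega
  | succ c ih =>
    intro v w hv hw h ℓ hℓ
    rw [nv_succ, nv_succ] at h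
    have h1 : nv c v = nv c w ∧ v c = w c := by
      have := hv c; have := hw c; omega
    rcases Nat.lt_succ_iff_lt_or_eq.mp hℓ with h' | h'
    · exact ih v w hv hw h1.1 ℓ h'
    · rw [h']; exact h1.2

private lemma geo (n : ℕ) : ∑ t ∈ range n, ((2:ℝ))⁻¹ ^ (t+1) = 1 - (2:ℝ)⁻¹ ^ n := by
  induction n with
  | zero => simp
  | succ n ih => rw [Finset.sum_range_succ, ih]; ring

/-- floor of `2^c` times the dyadic number with digits `v` -/
private lemma floor_eq (m c : ℕ) (hc : c ≤ m) (v : ℕ → ℕ) (hv : ∀ ℓ, v ℓ ≤ 1) :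
    ⌊(2:ℝ)^c * ∑ ℓ ∈ range m, (v ℓ : ℝ)/2^(ℓ+1)⌋ = (nv c v : ℤ) := by
  have hsplit : ∑ ℓ ∈ range m, (v ℓ : ℝ)/2^(ℓ+1)
      = ∑ ℓ ∈ range c, (v ℓ : ℝ)/2^(ℓ+1) + ∑ ℓ ∈ Ico c m, (v ℓ : ℝ)/2^(ℓ+1) := by
    rw [Finset.range_eq_Ico, ← Finset.sum_Ico_consecutive _ (Nat.zero_le c) hc,
      ← Finset.range_eq_Ico]
  rw [hsplit, mul_add]
  have h1 : (2:ℝ)^c * ∑ ℓ ∈ range c, (v ℓ : ℝ)/2^(ℓ+1) = (nv c v : ℕ) := by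
    rw [Finset.mul_sum]
    unfold nv
    push_cast
    refine Finset.sum_congr rfl fun ℓ hℓ => ?_
    have hℓ' : ℓ < c := Finset.mem_range.mp hℓ
    have : (2:ℝ)^c = 2^(c-1-ℓ) * 2^(ℓ+1) := by
      rw [← pow_add]; congr 1; omega
    rw [this]
    field_simp
  set r : ℝ := (2:ℝ)^c * ∑ ℓ ∈ Ico c m, (v ℓ : ℝ)/2^(ℓ+1) with hr
  have hr0 : 0 ≤ r := by
    apply mul_nonneg (by positivity)
    apply Finset.sum_nonneg; intro ℓ _; positivity
  have hr1 : r < 1 := by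
    have hb : r ≤ ∑ ℓ ∈ Ico c m, ((2:ℝ))⁻¹ ^ (ℓ + 1 - c) := by
      rw [hr, Finset.mul_sum]
      apply Finset.sum_le_sum
      intro ℓ hℓ
      have hℓ' : c ≤ ℓ := (Finset.mem_Ico.mp hℓ).1
      have hvℓ : (v ℓ : ℝ) ≤ 1 := by exact_mod_cast hv ℓ
      have h2 : (2:ℝ)^c * ((v ℓ : ℝ)/2^(ℓ+1)) ≤ (2:ℝ)^c * (1/2^(ℓ+1)) := by
        apply mul_le_mul_of_nonneg_left _ (by positivity)
        apply div_le_div_of_nonneg_right hvℓ (by positivity) |>.trans_eq rfl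
      refine h2.trans_eq ?_
      have : (ℓ + 1 : ℕ) = c + (ℓ + 1 - c) := by omega
      rw [this, pow_add, inv_pow]
      field_simp
      rw [Nat.add_sub_cancel_left]
    have heq : ∑ ℓ ∈ Ico c m, ((2:ℝ))⁻¹ ^ (ℓ + 1 - c) = ∑ t ∈ range (m - c), ((2:ℝ))⁻¹ ^ (t+1) := by
      rw [Finset.sum_Ico_eq_sum_range]
      refine Finset.sum_congr rfl fun t _ => ?_
      congr 1; omega
    rw [heq, geo] at hb
    have : (0:ℝ) < (2:ℝ)⁻¹ ^ (m - c) := by positivity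
    linarith
  rw [h1]
  rw [Int.floor_eq_iff]
  push_cast
  constructor <;> linarith

/-- the dyadic point of a digit vector -/
private def Sv (m : ℕ) (y : Fin m → ZMod 2) : ℝ :=
  ∑ ℓ : Fin m, (((y ℓ).val : ℝ)) / 2 ^ (ℓ.1 + 1)

private def dv (m : ℕ) (y : Fin m → ZMod 2) : ℕ → ℕ :=
  fun ℓ => if h : ℓ < m then (y ⟨ℓ, h⟩).val else 0

private lemma dv_le (m : ℕ) (y : Fin m → ZMod 2) (ℓ : ℕ) : dv m y ℓ ≤ 1 := by
  unfold dv
  split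
  · have := ZMod.val_lt (y ⟨ℓ, by assumption⟩); omega
  · omega

private lemma Sv_eq (m : ℕ) (y : Fin m → ZMod 2) :
    Sv m y = ∑ ℓ ∈ range m, (dv m y ℓ : ℝ)/2^(ℓ+1) := by
  rw [Sv, ← Fin.sum_univ_eq_sum_range (fun ℓ => (dv m y ℓ : ℝ)/2^(ℓ+1)) m]
  refine Finset.sum_congr rfl fun ℓ _ => ?_
  rw [dv, dif_pos ℓ.2]

private lemma floor_iff (m c : ℕ) (hc : c ≤ m) (y y' : Fin m → ZMod 2) :
    ⌊(2:ℝ)^c * Sv m y⌋ = ⌊(2:ℝ)^c * Sv m y'⌋ ↔ ∀ ℓ : Fin m, ℓ.1 < c → y ℓ = y' ℓ := by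
  rw [Sv_eq, Sv_eq, floor_eq m c hc _ (dv_le m y), floor_eq m c hc _ (dv_le m y')]
  constructor
  · intro h ℓ hℓ
    have := nv_inj c (dv m y) (dv m y') (dv_le m y) (dv_le m y')
      (by exact_mod_cast h) ℓ.1 hℓ
    rw [dv, dv, dif_pos ℓ.2, dif_pos ℓ.2] at this
    exact ZMod.val_injective 2 (by simpa using this)
  · intro h
    have : nv c (dv m y) = nv c (dv m y') := by
      unfold nv
      refine Finset.sum_congr rfl fun ℓ hℓ => ?_
      have hℓ' : ℓ < c := Finset.mem_range.mp hℓ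
      have hℓm : ℓ < m := lt_of_lt_of_le hℓ' hc
      rw [dv, dv, dif_pos hℓm, dif_pos hℓm, h ⟨ℓ, hℓm⟩ hℓ']
    exact_mod_cast this

private lemma zmod2_eq_iff (a b : ZMod 2) : a = b ↔ (0 : ZMod 2) = a + b := by
  revert a b; decide

private lemma bvec_zero (m : ℕ) : bvec m 0 = 0 := by
  funext ℓ; simp [bvec]

private lemma bvec_xor (m : ℕ) (i i' : ℕ) :
    bvec m (i ^^^ i') = bvec m i + bvec m i' := by
  funext ℓ
  simp only [bvec, Nat.testBit_xor, Pi.add_apply]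
  cases h1 : Nat.testBit i ℓ.1 <;> cases h2 : Nat.testBit i' ℓ.1 <;> simp <;> decide

private lemma pt_eq_Sv {m s : ℕ} (C : Fin s → Matrix (Fin m) (Fin m) (ZMod 2))
    (i : ℕ) (j : Fin s) : pt C i j = Sv m ((C j).mulVec (bvec m i)) := rfl

private lemma Nf_shift (m : ℕ) (c : ℕ) (hc : c + 1 ≤ m) (y y' : Fin m → ZMod 2) :
    Nf (Sv m y) (Sv m y') c = Nf (Sv m 0) (Sv m (y + y')) c := by
  have key : ∀ d : ℕ, d ≤ m →
      ((⌊(2:ℝ)^d * Sv m y⌋ = ⌊(2:ℝ)^d * Sv m y'⌋) ↔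
        (⌊(2:ℝ)^d * Sv m 0⌋ = ⌊(2:ℝ)^d * Sv m (y + y')⌋)) := by
    intro d hd
    rw [floor_iff m d hd y y', floor_iff m d hd 0 (y + y')]
    constructor
    · intro h ℓ hℓ
      simp only [Pi.zero_apply, Pi.add_apply]
      exact (zmod2_eq_iff _ _).mp (h ℓ hℓ)
    · intro h ℓ hℓ
      have := h ℓ hℓ
      simp only [Pi.zero_apply, Pi.add_apply] at this
      exact (zmod2_eq_iff _ _).mpr this
  unfold Nf
  rw [if_congr (key (c+1) hc) rfl rfl, if_congr (key c (by omega)) rfl rfl]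

theorem statement (m s : ℕ) (hm : 1 ≤ m) (hs : 1 ≤ s)
    (C : Fin s → Matrix (Fin m) (Fin m) (ZMod 2))
    (u : Finset (Fin s)) (hu : u.Nonempty)
    (k : Fin s → ℕ) (hk : ∀ j ∈ u, k j ≤ m - 1)
    (i : ℕ) (hi : i < 2 ^ m) :
    ∑ i' ∈ Finset.range (2 ^ m), ∏ j ∈ u, Nf (pt C i j) (pt C i' j) (k j) =
      ∑ i' ∈ Finset.range (2 ^ m), ∏ j ∈ u, Nf (pt C 0 j) (pt C i' j) (k j) := by
  classical
  have hm1 : ∀ j ∈ u, k j + 1 ≤ m := fun j hj => by have := hk j hj; omega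
  have step1 : ∀ i' : ℕ,
      (∏ j ∈ u, Nf (pt C i j) (pt C i' j) (k j)) =
      ∏ j ∈ u, Nf (pt C 0 j) (pt C (i ^^^ i') j) (k j) := by
    intro i'
    refine Finset.prod_congr rfl fun j hj => ?_
    rw [pt_eq_Sv, pt_eq_Sv, pt_eq_Sv, pt_eq_Sv, bvec_xor, Matrix.mulVec_add,
      bvec_zero, Matrix.mulVec_zero]
    exact Nf_shift m (k j) (hm1 j hj) _ _
  calc ∑ i' ∈ Finset.range (2 ^ m), ∏ j ∈ u, Nf (pt C i j) (pt C i' j) (k j)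
      = ∑ i' ∈ Finset.range (2 ^ m), ∏ j ∈ u, Nf (pt C 0 j) (pt C (i ^^^ i') j) (k j) :=
        Finset.sum_congr rfl fun i' _ => step1 i'
    _ = ∑ i' ∈ Finset.range (2 ^ m), ∏ j ∈ u, Nf (pt C 0 j) (pt C i' j) (k j) := by
        refine Finset.sum_nbij' (fun i' => i ^^^ i') (fun i' => i ^^^ i') ?_ ?_ ?_ ?_ ?_
        · intro a ha
          exact Finset.mem_range.mpr (Nat.xor_lt_two_pow hi (Finset.mem_range.mp ha))
        · intro a ha
          exact Finset.mem_range.mpr (Nat.xor_lt_two_pow hi (Finset.mem_range.mp ha))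
        · intro a _; exact Nat.xor_xor_cancel_left i a
        · intro a _; exact Nat.xor_xor_cancel_left i a
        · intro a _; rfl


end
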